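/- Let D be a division ring, A : Matrix m n D with m, n finite, and k ≤ |m|, k ≤ |n|. Suppose there are injections S : Fin k ↪ m and T : Fin k ↪ n such that the k×k submatrix A.submatrix S T is invertible, while every (k+1)×(k+1) square submatrix of A is not invertible. Then every row of A is a left linear combination of the rows indexed by S; that is, for every p : m there exist coefficients r : Fin k → D with A p = ∑ s, r s • A (S s) (equivalently A p j = ∑ s, r s * A (S s) j for all j). -/

import Mathlib

open Matrix

theorem stmt_1 {D : Type*} [DivisionRing D] {m n : Type*} [Fintype m] [Fintype n]
    (A : Matrix m n D) (k : ℕ) (hkm : k ≤ Fintype.card m) (hkn : k ≤ Fintype.card n)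
    (S : Fin k ↪ m) (T : Fin k ↪ n)
    (hminor : IsUnit (A.submatrix ⇑S ⇑T))
    (hmax : ∀ (S' : Fin (k + 1) ↪ m) (T' : Fin (k + 1) ↪ n),
      ¬ IsUnit (A.submatrix ⇑S' ⇑T')) :
    ∀ p : m, ∃ r : Fin k → D, ∀ j : n, A p j = ∑ s, r s * A (S s) j := by
  intro p
  by_cases hp : ∃ s₀, S s₀ = p
  · obtain ⟨s₀, rfl⟩ := hp
    refine ⟨fun s => if s = s₀ then 1 else 0, fun j => ?_⟩
    simp [ite_mul]
  · push_neg at hp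
    set B : Matrix (Fin k) (Fin k) D := A.submatrix ⇑S ⇑T with hBdef
    set U : Matrix (Fin k) (Fin k) D := (hminor.unit⁻¹).val with hUdef
    have hUB : U * B = 1 := hminor.val_inv_mul
    have hBU : B * U = 1 := hminor.mul_val_inv
    set r : Fin k → D := fun s => ∑ t, A p (T t) * U t s with hrdef
    have key : ∀ t, ∑ s, r s * B s t = A p (T t) := by
      intro t
      have h1 : ∑ s, r s * B s t = ∑ s, ∑ t', A p (T t') * (U t' s * B s t) := by
        simp [hrdef, Finset.sum_mul, mul_assoc]
      rw [h1, Finset.sum_comm]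
      simp_rw [← Finset.mul_sum]
      have h2 : ∀ t', ∑ s, U t' s * B s t = (1 : Matrix (Fin k) (Fin k) D) t' t := by
        intro t'; rw [← hUB]; rfl
      simp [h2, one_apply]
    refine ⟨r, fun j => ?_⟩
    by_contra hv
    set v : D := A p j - ∑ s, r s * A (S s) j with hvdef
    have hvne : v ≠ 0 := sub_ne_zero.mpr hv
    have hjT : ∀ t, T t ≠ j := by
      intro t ht
      apply hv
      rw [← ht, ← key t]
      rfl
    -- build the (k+1)×(k+1) submatrix indexed by Fin k ⊕ Fin 1
    have hfinj : Function.Injective (Sum.elim (⇑S) (fun _ : Fin 1 => p)) := by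
      rintro (a | a) (b | b) h <;> simp at h
      · exact congrArg Sum.inl h
      · exact absurd h (hp a)
      · exact absurd h.symm (hp b)
      · exact congrArg Sum.inr (Subsingleton.elim a b)
    have hginj : Function.Injective (Sum.elim (⇑T) (fun _ : Fin 1 => j)) := by
      rintro (a | a) (b | b) h <;> simp at h
      · exact congrArg Sum.inl h
      · exact absurd h (hjT a)
      · exact absurd h.symm (hjT b)
      · exact congrArg Sum.inr (Subsingleton.elim a b)
    set f : Fin k ⊕ Fin 1 → m := Sum.elim (⇑S) (fun _ => p) with hfdef
    set g : Fin k ⊕ Fin 1 → n := Sum.elim (⇑T) (fun _ => j) with hgdef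
    set W : Matrix (Fin k ⊕ Fin 1) (Fin k ⊕ Fin 1) D := A.submatrix f g with hWdef
    -- block pieces
    set c : Matrix (Fin k) (Fin 1) D := fun i _ => A (S i) j with hcdef
    set ρ : Matrix (Fin 1) (Fin k) D := fun _ t => A p (T t) with hρdef
    set dM : Matrix (Fin 1) (Fin 1) D := fun _ _ => A p j with hdMdef
    have hW : W = fromBlocks B c ρ dM := by
      ext i t
      rcases i with i | i <;> rcases t with t | t <;> rfl
    set rM : Matrix (Fin 1) (Fin k) D := fun _ s => r s with hrMdef
    set dv : Matrix (Fin 1) (Fin 1) D := fun _ _ => v with hdvdef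
    set dvi : Matrix (Fin 1) (Fin 1) D := fun _ _ => v⁻¹ with hdvidef
    set M₀ : Matrix (Fin k ⊕ Fin 1) (Fin k ⊕ Fin 1) D := fromBlocks B c 0 dv with hM₀def
    set E : Matrix (Fin k ⊕ Fin 1) (Fin k ⊕ Fin 1) D := fromBlocks 1 0 rM 1 with hEdef
    set E' : Matrix (Fin k ⊕ Fin 1) (Fin k ⊕ Fin 1) D := fromBlocks 1 0 (-rM) 1 with hE'def
    have hEE' : E * E' = 1 := by
      rw [hEdef, hE'def, fromBlocks_multiply]
      simp [← fromBlocks_one]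
    have hE'W : E' * W = M₀ := by
      rw [hE'def, hW, fromBlocks_multiply, hM₀def]
      have h3 : (-rM) * B + (1 : Matrix (Fin 1) (Fin 1) D) * ρ = 0 := by
        rw [Matrix.one_mul]
        ext a t
        change (-rM * B + ρ) a t = 0
        simp only [Matrix.add_apply, Matrix.neg_mul, Matrix.neg_apply, Matrix.mul_apply,
          Matrix.zero_apply]
        simp [hrMdef, hρdef, key t]
      have h4 : (-rM) * c + (1 : Matrix (Fin 1) (Fin 1) D) * dM = dv := by
        rw [Matrix.one_mul]
        ext a b
        change (-rM * c + dM) a b = dv a b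
        simp only [Matrix.add_apply, Matrix.neg_mul, Matrix.neg_apply,
          Matrix.mul_apply]
        simp only [Matrix.add_apply, Matrix.neg_mul, Matrix.neg_apply,
          Matrix.mul_apply, hrMdef, hcdef, hdMdef, hdvdef, hvdef]
        rw [neg_add_eq_sub]
      rw [h3, h4]
      simp
    have hdvdvi : dv * dvi = 1 := by
      ext a b
      change (dv * dvi) a b = _
      simp only [Matrix.mul_apply]
      simp [Matrix.mul_apply, hdvdef, hdvidef, Matrix.one_apply,
        Fin.sum_univ_one, mul_inv_cancel₀ hvne, Subsingleton.elim a b]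
    have hdvidv : dvi * dv = 1 := by
      ext a b
      change (dvi * dv) a b = _
      simp only [Matrix.mul_apply]
      simp [Matrix.mul_apply, hdvdef, hdvidef, Matrix.one_apply,
        Fin.sum_univ_one, inv_mul_cancel₀ hvne, Subsingleton.elim a b]
    set N : Matrix (Fin k ⊕ Fin 1) (Fin k ⊕ Fin 1) D :=
      fromBlocks U (-(U * c * dvi)) 0 dvi with hNdef
    have hM₀N : M₀ * N = 1 := by
      rw [hM₀def, hNdef, fromBlocks_multiply]
      have h1 : B * -(U * c * dvi) + c * dvi = 0 := by
        rw [Matrix.mul_neg, ← Matrix.mul_assoc, ← Matrix.mul_assoc, hBU, Matrix.one_mul]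
        exact neg_add_cancel _
      rw [hBU, h1, hdvdvi]
      simp [← fromBlocks_one]
    have hNM₀ : N * M₀ = 1 := by
      rw [hM₀def, hNdef, fromBlocks_multiply]
      have h1 : U * c + -(U * c * dvi) * dv = 0 := by
        rw [Matrix.neg_mul, Matrix.mul_assoc, hdvidv, Matrix.mul_one]
        exact add_neg_cancel _
      rw [hUB, h1, hdvidv]
      simp [← fromBlocks_one]
    have hM₀unit : IsUnit M₀ := ⟨⟨M₀, N, hM₀N, hNM₀⟩, rfl⟩
    have hE'E : E' * E = 1 := by
      rw [hEdef, hE'def, fromBlocks_multiply]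
      simp [← fromBlocks_one]
    have hEunit : IsUnit E := ⟨⟨E, E', hEE', hE'E⟩, rfl⟩
    have hWunit : IsUnit W := by
      have : W = E * M₀ := by
        rw [← hE'W, ← Matrix.mul_assoc, hEE', Matrix.one_mul]
      rw [this]
      exact hEunit.mul hM₀unit
    -- transport along finSumFinEquiv to contradict hmax
    set e : Fin (k + 1) ≃ Fin k ⊕ Fin 1 := finSumFinEquiv.symm with hedef
    refine hmax ((e.toEmbedding).trans ⟨f, hfinj⟩) ((e.toEmbedding).trans ⟨g, hginj⟩) ?_
    obtain ⟨⟨Wv, Wi, hWi1, hWi2⟩, hWu⟩ := hWunit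
    have hWv : Wv = W := hWu
    subst hWv
    have hsub : A.submatrix (⇑((e.toEmbedding).trans ⟨f, hfinj⟩))
        (⇑((e.toEmbedding).trans ⟨g, hginj⟩)) = W.submatrix ⇑e ⇑e := by
      rfl
    rw [hsub]
    refine ⟨⟨W.submatrix ⇑e ⇑e, Wi.submatrix ⇑e ⇑e, ?_, ?_⟩, rfl⟩
    · rw [Matrix.submatrix_mul_equiv, hWi1, Matrix.submatrix_one_equiv]
    · rw [Matrix.submatrix_mul_equiv, hWi2, Matrix.submatrix_one_equiv]
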